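/- If a union ultrafilter u on F has the Ramsey property for pairs, then u is stable: for every countable sequence of sets FU(s^α) ∈ u (α < ω) there is FU(t) ∈ u with t ⊑* s^α (i.e., all but finitely many t_j lie in FU(s^α), with all finite unions of those in FU(s^α)) for every α. -/

import Mathlib

open Finset

/-- `FU t` : the set of finite unions of an infinite sequence `t` in `F`. -/
def FU (t : ℕ → Finset ℕ) : Set (Finset ℕ) :=
  {x | ∃ v : Finset ℕ, v.Nonempty ∧ x = v.biUnion t}

/-- a sequence of nonempty pairwise disjoint finite sets. -/
def IsDisjointSeq (t : ℕ → Finset ℕ) : Prop :=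
  (∀ i, (t i).Nonempty) ∧ Pairwise (Function.onFun Disjoint t)

/-- `ordLT s t` : `max s < min t`, i.e. every element of `s` is below every element of `t`. -/
def ordLT (s t : Finset ℕ) : Prop := ∀ a ∈ s, ∀ b ∈ t, a < b

/-- `t` is an almost condensation of `s`: the FU-set of some tail of `t` is inside `FU s`. -/
def AlmostCond (t s : ℕ → Finset ℕ) : Prop :=
  ∃ m, FU (fun n => t (n + m)) ⊆ FU s

/-- a union ultrafilter: an ultrafilter on `F` with a base of FU-sets of disjoint sequences. -/
def IsUnionUltrafilter (u : Ultrafilter (Finset ℕ)) : Prop :=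
  ∀ A ∈ u, ∃ t, IsDisjointSeq t ∧ FU t ∈ u ∧ FU t ⊆ A

/-- stability: countably many FU-sets in `u` admit a common almost condensation in `u`. -/
def IsStable (u : Ultrafilter (Finset ℕ)) : Prop :=
  ∀ s : ℕ → ℕ → Finset ℕ, (∀ α, IsDisjointSeq (s α)) → (∀ α, FU (s α) ∈ u) →
    ∃ t, IsDisjointSeq t ∧ FU t ∈ u ∧ ∀ α, AlmostCond t (s α)

/-- the Ramsey property for pairs: every finite partition of the ordered pairs `F²_<`
has a homogeneous set of the form `A²_<` with `A ∈ u`. -/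
def RamseyPairs (u : Ultrafilter (Finset ℕ)) : Prop :=
  ∀ n : ℕ, ∀ c : Finset ℕ × Finset ℕ → Fin (n + 1),
    ∃ A ∈ u, ∃ i, ∀ v ∈ A, ∀ w ∈ A, ordLT v w → c (v, w) = i

lemma mem_FU_self (t : ℕ → Finset ℕ) (i : ℕ) : t i ∈ FU t :=
  ⟨{i}, singleton_nonempty i, by simp⟩

/-- every element of a member of a union ultrafilter eventually has large min -/
lemma highMin (u : Ultrafilter (Finset ℕ)) (hu : IsUnionUltrafilter u) (n : ℕ) :
    {x : Finset ℕ | ∀ a ∈ x, n < a} ∈ u := by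
  classical
  set g : Finset ℕ → Finset ℕ := fun x => x ∩ Finset.range (n + 1) with hg
  have hV : {e : Finset ℕ | e ⊆ Finset.range (n + 1)} ∈ u.map g := by
    apply Filter.mem_map.mpr
    refine Filter.mem_of_superset Filter.univ_mem ?_
    intro x _
    simp only [Set.mem_preimage, Set.mem_setOf_eq, hg]
    exact Finset.inter_subset_right
  have hfin : {e : Finset ℕ | e ⊆ Finset.range (n + 1)}.Finite := by
    apply Set.Finite.subset ((Finset.range (n+1)).powerset).finite_toSet
    intro e he
    simp only [Finset.coe_powerset, Set.mem_preimage, Set.mem_powerset_iff, Finset.coe_subset]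
    exact he
  obtain ⟨e, he, hpure⟩ := Ultrafilter.eq_pure_of_finite_mem hfin hV
  have hmem : {x : Finset ℕ | g x = e} ∈ u := by
    have : {e} ∈ (Ultrafilter.map g u : Filter (Finset ℕ)) := by
      rw [hpure]; exact Filter.mem_pure.mpr rfl
    simp [Filter.mem_map] at this; exact this
  rcases e.eq_empty_or_nonempty with rfl | hne
  · refine Filter.mem_of_superset hmem ?_
    intro x hx a ha
    by_contra h
    have : a ∈ g x := by
      simp only [hg, Finset.mem_inter, Finset.mem_range]
      exact ⟨ha, by omega⟩
    rw [hx] at this; simp at this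
  · exfalso
    obtain ⟨t, ht, -, hsub⟩ := hu _ hmem
    obtain ⟨a, ha⟩ := hne
    have h0 : g (t 0) = e := hsub (mem_FU_self t 0)
    have h1 : g (t 1) = e := hsub (mem_FU_self t 1)
    have ha0 : a ∈ t 0 := by
      have := h0 ▸ ha; simp only [hg, Finset.mem_inter] at this; exact this.1
    have ha1 : a ∈ t 1 := by
      have := h1 ▸ ha; simp only [hg, Finset.mem_inter] at this; exact this.1
    exact Finset.disjoint_left.mp (ht.2 (by norm_num : (0:ℕ) ≠ 1)) ha0 ha1

lemma FU_tail_subset (t : ℕ → Finset ℕ) (m : ℕ) : FU (fun n => t (n + m)) ⊆ FU t := by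
  rintro x ⟨v, hv, rfl⟩
  refine ⟨v.image (· + m), hv.image _, ?_⟩
  classical
  rw [Finset.image_biUnion]

theorem ramsey_pairs_implies_stable (u : Ultrafilter (Finset ℕ))
    (hu : IsUnionUltrafilter u) (hR : RamseyPairs u) : IsStable u := by
  classical
  intro s hs hsu
  -- a descending chain T with FU (T α) ⊆ FU (s α)
  have step : ∀ (α : ℕ) (t : {t : ℕ → Finset ℕ // FU t ∈ u}),
      ∃ t' : {t : ℕ → Finset ℕ // FU t ∈ u},
        IsDisjointSeq t'.1 ∧ FU t'.1 ⊆ FU t.1 ∩ FU (s α) := by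
    intro α t
    obtain ⟨t', h1, h2, h3⟩ := hu (FU t.1 ∩ FU (s α))
      (Filter.inter_mem t.2 (hsu α))
    exact ⟨⟨t', h2⟩, h1, h3⟩
  choose f hf1 hf2 using step
  obtain ⟨t0, ht01, ht02, ht03⟩ := hu (FU (s 0)) (hsu 0)
  set T : ℕ → {t : ℕ → Finset ℕ // FU t ∈ u} :=
    fun n => Nat.rec ⟨t0, ht02⟩ (fun k ih => f (k + 1) ih) n with hT
  have hTdisj : ∀ α, IsDisjointSeq (T α).1 := by
    intro α
    cases α with
    | zero => exact ht01
    | succ k => exact hf1 (k+1) (T k)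
  have hTmono : ∀ α β, α ≤ β → FU (T β).1 ⊆ FU (T α).1 := by
    intro α β hle
    induction hle with
    | refl => exact fun x hx => hx
    | @step b hb ih => exact fun x hx => ih ((hf2 (b+1) (T b) hx).1)
  have hTs : ∀ α, FU (T α).1 ⊆ FU (s α) := by
    intro α
    cases α with
    | zero => exact ht03
    | succ k => exact fun x hx => (hf2 (k+1) (T k) hx).2
  -- the coloring
  set c : Finset ℕ × Finset ℕ → Fin 2 :=
    fun p => if p.2 ∈ FU (T (p.1.sup id)).1 then 0 else 1 with hc
  obtain ⟨A, hA, i, hhom⟩ := hR 1 c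
  -- the homogeneous color is 0
  have hi : i = 0 := by
    obtain ⟨v, hv⟩ := u.nonempty_of_mem hA
    have hW : A ∩ FU (T (v.sup id)).1 ∩ {x | ∀ a ∈ x, v.sup id < a} ∈ u :=
      Filter.inter_mem (Filter.inter_mem hA (T (v.sup id)).2) (highMin u hu (v.sup id))
    obtain ⟨w, hw⟩ := u.nonempty_of_mem hW
    have hlt : ordLT v w := by
      intro a ha b hb
      exact lt_of_le_of_lt (Finset.le_sup (f := id) ha) (hw.2 b hb)
    have := hhom v hv w hw.1.1 hlt
    rw [← this, hc]
    simp [hw.1.2]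
  have hhom' : ∀ v ∈ A, ∀ w ∈ A, ordLT v w → w ∈ FU (T (v.sup id)).1 := by
    intro v hv w hw hlt
    have := hhom v hv w hw hlt
    rw [hi, hc] at this
    by_contra h
    simp only [hc, if_neg h] at this
    exact one_ne_zero this
  obtain ⟨t, ht1, ht2, ht3⟩ := hu A hA
  refine ⟨t, ht1, ht2, ?_⟩
  intro α
  -- a member of FU t with a large sup
  set v : Finset ℕ := (Finset.range (α + 1)).biUnion t with hv
  have hvFU : v ∈ FU t := ⟨_, Finset.nonempty_range_iff.mpr (Nat.succ_ne_zero α), rfl⟩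
  set N : ℕ := v.sup id with hN
  have hNα : α ≤ N := by
    have hcard : α + 1 ≤ v.card := by
      rw [hv, Finset.card_biUnion]
      · calc α + 1 = ∑ _i ∈ Finset.range (α+1), 1 := by simp
          _ ≤ _ := Finset.sum_le_sum fun i _ => Finset.card_pos.mpr (ht1.1 i)
      · intro x _ y _ hxy; exact ht1.2 hxy
    have hsub : v ⊆ Finset.range (N + 1) := by
      intro a ha
      simp only [Finset.mem_range]
      exact Nat.lt_succ_of_le (Finset.le_sup (f := id) ha)
    have := Finset.card_le_card hsub
    rw [Finset.card_range] at this
    omega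
  -- find the tail
  have hSfin : {j : ℕ | ∃ a ∈ t j, a ≤ N}.Finite := by
    have hsub : {j : ℕ | ∃ a ∈ t j, a ≤ N} ⊆
        ⋃ a ∈ Finset.range (N + 1), {j : ℕ | a ∈ t j} := by
      rintro j ⟨a, ha, haN⟩
      refine Set.mem_biUnion ?_ ha
      show a ∈ Finset.range (N + 1)
      rw [Finset.mem_range]
      omega
    refine Set.Finite.subset (Set.Finite.biUnion (Finset.range (N+1)).finite_toSet ?_) hsub
    intro a _
    refine Set.Subsingleton.finite ?_
    intro j hj k hk
    by_contra hjk
    exact Finset.disjoint_left.mp (ht1.2 hjk) hj hk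
  obtain ⟨m, hm⟩ := hSfin.bddAbove
  refine ⟨m + 1, ?_⟩
  intro w hw
  have hwFU : w ∈ FU t := FU_tail_subset t (m+1) hw
  have hwmin : ∀ a ∈ w, N < a := by
    obtain ⟨vw, hvw, rfl⟩ := hw
    intro a ha
    simp only [Finset.mem_biUnion] at ha
    obtain ⟨n, hn, han⟩ := ha
    by_contra h
    have : n + (m + 1) ∈ {j : ℕ | ∃ a ∈ t j, a ≤ N} := ⟨a, han, by omega⟩
    have := hm this
    omega
  have hordlt : ordLT v w := fun a ha b hb =>
    lt_of_le_of_lt (Finset.le_sup (f := id) ha) (hwmin b hb)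
  have : w ∈ FU (T N).1 := hhom' v (ht3 hvFU) w (ht3 hwFU) hordlt
  exact hTs α (hTmono α N hNα this)
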